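/- arXiv:2303.13947 — 2 statements merged into one kernel-verified Lean document; each statement's English description precedes it below -/
import Mathlib

section
/- For permutations σ, τ of {1,…,r}, the composition of the partial maps (U_τ, p_τ) and (U_σ, p_σ) is contained in (U_{τσ}, p_{τσ}): i.e., U_σ ∩ p_σ^{-1}(U_τ) ⊆ U_{τσ}, and on this set p_τ ∘ p_σ = p_{τσ}. -/
/-- The composition of the partial maps `(U_τ, p_τ)` and `(U_σ, p_σ)` is contained in
`(U_{τσ}, p_{τσ})`: `U_σ ∩ p_σ⁻¹(U_τ) ⊆ U_{τσ}`, and on this set `p_τ ∘ p_σ = p_{τσ}`. -/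
theorem stmt7 {r : ℕ} (σ τ : Equiv.Perm (Fin r)) :
    let Uσ : Equiv.Perm (Fin r) → Set (Fin r → ℂ) :=
      fun ρ => {α | ∀ i j : Fin r, i < j → ρ j < ρ i → α i ≠ α j}
    let p : Equiv.Perm (Fin r) → (Fin r → ℂ) → (Fin r → ℂ) :=
      fun ρ α k => α (ρ⁻¹ k)
    (Uσ σ ∩ (p σ) ⁻¹' (Uσ τ) ⊆ Uσ (τ * σ)) ∧
    (∀ α ∈ Uσ σ ∩ (p σ) ⁻¹' (Uσ τ), p τ (p σ α) = p (τ * σ) α) := by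
  intro Uσ p
  constructor
  · rintro α ⟨hσ, hτ⟩ i j hij hts
    have hne : σ i ≠ σ j := fun h => absurd (σ.injective h) (ne_of_lt hij)
    rcases lt_or_gt_of_ne hne with h | h
    · have := hτ (σ i) (σ j) h (by simpa using hts)
      simpa [p] using this
    · exact hσ i j hij h
  · rintro α ⟨hσ, hτ⟩
    funext k
    simp [p, Equiv.Perm.mul_apply, Equiv.Perm.mul_def]
end

section
/- Let p : X → Y be a local homeomorphism between topological spaces with X Hausdorff and locally compact, and let K ⊆ X be a compact subset such that p restricted to K is injective. Then there exists an open set U with K ⊆ U ⊆ X such that p restricted to U is injective (hence an open embedding). -/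
open Set Topology Filter

/-- A local homeomorphism that is injective on a compact set is injective (hence an open
embedding) on some open neighborhood of that compact set. -/
theorem stmt13 {X Y : Type*} [TopologicalSpace X] [TopologicalSpace Y]
    [T2Space X] [LocallyCompactSpace X] [T2Space Y]
    (p : X → Y) (hp : IsLocalHomeomorph p)
    (K : Set X) (hK : IsCompact K) (hinj : Set.InjOn p K) :
    ∃ U : Set X, IsOpen U ∧ K ⊆ U ∧ Set.InjOn p U ∧
      Topology.IsOpenEmbedding (U.restrict p) := by
  set C : Set (X × X) := {q | p q.1 = p q.2 ∧ q.1 ≠ q.2} with hC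
  have hCopen : IsOpen Cᶜ := by
    rw [isOpen_iff_mem_nhds]
    rintro ⟨a, b⟩ hq
    by_cases hab : a = b
    · subst hab
      obtain ⟨e, ha, hpe⟩ := hp a
      have : e.source ×ˢ e.source ∈ 𝓝 (a, a) :=
        prod_mem_nhds (e.open_source.mem_nhds ha) (e.open_source.mem_nhds ha)
      filter_upwards [this]
      rintro ⟨u, v⟩ ⟨hu, hv⟩ ⟨hpeq, hne⟩
      exact hne (e.injOn hu hv (by rwa [hpe] at hpeq))
    · have : {q : X × X | p q.1 ≠ p q.2} ∈ 𝓝 (a, b) ∨ a ≠ b := Or.inr hab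
      by_cases hpab : p a = p b
      · exact absurd ⟨hpab, hab⟩ hq
      · have hopen : IsOpen {q : X × X | p q.1 ≠ p q.2} :=
          isOpen_ne_fun (hp.continuous.comp continuous_fst)
            (hp.continuous.comp continuous_snd)
        filter_upwards [hopen.mem_nhds hpab]
        rintro ⟨u, v⟩ h ⟨hpeq, _⟩
        exact h hpeq
  have hKK : K ×ˢ K ⊆ Cᶜ := by
    rintro ⟨a, b⟩ ⟨ha, hb⟩ ⟨hpeq, hne⟩
    exact hne (hinj ha hb hpeq)
  have hmem : Cᶜ ∈ 𝓝ˢ K ×ˢ 𝓝ˢ K := by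
    rw [← hK.nhdsSet_prod_eq hK]
    exact hCopen.mem_nhdsSet.mpr hKK
  obtain ⟨A, hA, B, hB, hAB⟩ := Filter.mem_prod_iff.mp hmem
  obtain ⟨U₁, hU₁o, hKU₁, hU₁A⟩ := mem_nhdsSet_iff_exists.mp hA
  obtain ⟨U₂, hU₂o, hKU₂, hU₂B⟩ := mem_nhdsSet_iff_exists.mp hB
  refine ⟨U₁ ∩ U₂, hU₁o.inter hU₂o, subset_inter hKU₁ hKU₂, ?_, ?_⟩
  all_goals
    have hinjU : Set.InjOn p (U₁ ∩ U₂) := by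
      intro x hx y hy hpeq
      by_contra hne
      exact hAB (Set.mk_mem_prod (hU₁A hx.1) (hU₂B hy.2)) ⟨hpeq, hne⟩
  · exact hinjU
  · have hval : Topology.IsOpenEmbedding ((↑) : (U₁ ∩ U₂ : Set X) → X) :=
      (hU₁o.inter hU₂o).isOpenEmbedding_subtypeVal
    exact (hp.comp hval.isLocalHomeomorph).isOpenEmbedding_of_injective
      fun a b h => Subtype.ext (hinjU a.2 b.2 h)
end
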